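/- The limit as δ → ∞ of φ_1(δ) = 1 − δ(1 − I_{1/2}(1/(δ−2), (δ−1)/(δ−2))) equals 1 − ln 2. -/

import Mathlib

/-- Regularized incomplete Beta function
`I_x(α, β) = (Γ(α+β)/(Γ(α)Γ(β))) ∫_0^x y^{α−1}(1−y)^{β−1} dy`. -/
noncomputable def regIncBeta (x α β : ℝ) : ℝ :=
  (Real.Gamma (α + β) / (Real.Gamma α * Real.Gamma β)) *
    ∫ y in (0 : ℝ)..x, y ^ (α - 1) * (1 - y) ^ (β - 1)

open Real Filter MeasureTheory Set Topology

noncomputable def Dfun (ε : ℝ) : ℝ := Real.Gamma (1 + 2 * ε) / (Real.Gamma (1 + ε)) ^ 2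

noncomputable def Jfun (ε : ℝ) : ℝ :=
  ∫ y in (0 : ℝ)..(1 / 2), y ^ (ε - 1) * ((1 - y) ^ ε - 1)

noncomputable def hfun (ε : ℝ) : ℝ := Dfun ε * (1 / 2 : ℝ) ^ ε

lemma gamma_hasDerivAt : HasDerivAt Real.Gamma (deriv Real.Gamma 1) 1 := by
  refine (Real.differentiableAt_Gamma ?_).hasDerivAt
  intro m h
  have h0 : (0 : ℝ) ≤ m := m.cast_nonneg
  linarith [h]

lemma hasDerivAt_D : HasDerivAt Dfun 0 0 := by
  set c := deriv Real.Gamma 1 with hc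
  have hΓ : HasDerivAt Real.Gamma c 1 := gamma_hasDerivAt
  have hl1 : HasDerivAt (fun ε : ℝ => 1 + 2 * ε) 2 0 := by
    simpa using ((hasDerivAt_id (0 : ℝ)).const_mul 2).const_add 1
  have hl2 : HasDerivAt (fun ε : ℝ => 1 + ε) 1 0 := by
    simpa using (hasDerivAt_id (0 : ℝ)).const_add 1
  have hΓ1 : HasDerivAt Real.Gamma c ((fun ε : ℝ => 1 + 2 * ε) 0) := by norm_num; exact hΓ
  have hΓ2 : HasDerivAt Real.Gamma c ((fun ε : ℝ => 1 + ε) 0) := by norm_num; exact hΓ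
  have h1 : HasDerivAt (fun ε : ℝ => Real.Gamma (1 + 2 * ε)) (c * 2) 0 := by
    simpa [Function.comp_def] using hΓ1.comp 0 hl1
  have h2' : HasDerivAt (fun ε : ℝ => Real.Gamma (1 + ε)) c 0 := by
    simpa [Function.comp_def] using hΓ2.comp 0 hl2
  have h2 : HasDerivAt (fun ε : ℝ => (Real.Gamma (1 + ε)) ^ 2) (2 * c) 0 := by
    have := h2'.pow 2
    norm_num [Real.Gamma_one] at this
    exact this
  have hne : ((Real.Gamma (1 + (0:ℝ))) ^ 2) ≠ 0 := by norm_num [Real.Gamma_one]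
  have := h1.div h2 hne
  have hval : (c * 2 * Real.Gamma (1 + (0:ℝ)) ^ 2 -
      Real.Gamma (1 + 2 * (0:ℝ)) * (2 * c)) / (Real.Gamma (1 + (0:ℝ)) ^ 2) ^ 2 = 0 := by
    norm_num [Real.Gamma_one]; ring
  rw [hval] at this
  exact this

lemma Dfun_zero : Dfun 0 = 1 := by norm_num [Dfun, Real.Gamma_one]

lemma hasDerivAt_h : HasDerivAt hfun (-Real.log 2) 0 := by
  have hr : HasDerivAt (fun ε : ℝ => (1 / 2 : ℝ) ^ ε)
      ((1 / 2 : ℝ) ^ (0:ℝ) * Real.log (1 / 2)) 0 :=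
    (Real.hasStrictDerivAt_const_rpow (by norm_num) 0).hasDerivAt
  have := hasDerivAt_D.mul hr
  have hval : (0 : ℝ) * (1 / 2 : ℝ) ^ (0:ℝ) + Dfun 0 * ((1 / 2 : ℝ) ^ (0:ℝ) * Real.log (1 / 2))
      = -Real.log 2 := by
    rw [Dfun_zero]
    simp [Real.log_div, Real.rpow_zero]
  rw [hval] at this
  exact this

lemma hfun_zero : hfun 0 = 1 := by simp [hfun, Dfun_zero]

lemma pt_bound {ε : ℝ} (hε : 0 < ε) {y : ℝ} (hy : y ∈ Set.Ioc (0:ℝ) (1/2)) :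
    ‖y ^ (ε - 1) * ((1 - y) ^ ε - 1)‖ ≤ 2 * ε := by
  obtain ⟨hy0, hy2⟩ := hy
  have h1y : (1:ℝ)/2 ≤ 1 - y := by linarith
  have h1y0 : (0:ℝ) < 1 - y := by linarith
  have hle1 : (1 - y) ^ ε ≤ 1 := Real.rpow_le_one h1y0.le (by linarith) hε.le
  -- lower bound on (1-y)^ε
  have hexp : 1 + ε * Real.log (1 - y) ≤ (1 - y) ^ ε := by
    rw [Real.rpow_def_of_pos h1y0]
    have := Real.add_one_le_exp (Real.log (1 - y) * ε)
    calc 1 + ε * Real.log (1 - y) = Real.log (1 - y) * ε + 1 := by ring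
    _ ≤ Real.exp (Real.log (1 - y) * ε) := this
  have hlog : -Real.log (1 - y) ≤ 2 * y := by
    have hpos : (0:ℝ) < (1 - y)⁻¹ := by positivity
    have h := Real.log_le_sub_one_of_pos hpos
    rw [Real.log_inv] at h
    have hinv : (1 - y)⁻¹ * (1 - y) = 1 := inv_mul_cancel₀ h1y0.ne'
    have hfrac : (1 - y)⁻¹ - 1 ≤ 2 * y := by
      nlinarith [hinv, h1y0, mul_nonneg hy0.le (show (0:ℝ) ≤ 1 - 2*y by linarith)]
    linarith
  have hsub : 1 - (1 - y) ^ ε ≤ 2 * ε * y := by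
    have : -Real.log (1 - y) * ε ≤ 2 * y * ε := by
      apply mul_le_mul_of_nonneg_right hlog hε.le
    nlinarith
  have habs : |(1 - y) ^ ε - 1| ≤ 2 * ε * y := by
    rw [abs_sub_comm, abs_of_nonneg (by linarith)]
    exact hsub
  have hy' : (0:ℝ) ≤ y ^ (ε - 1) := Real.rpow_nonneg hy0.le _
  have hid : y ^ (ε - 1) * y = y ^ ε := by
    have := Real.rpow_add_one hy0.ne' (ε - 1)
    rw [show ε - 1 + 1 = ε by ring] at this
    rw [this]
  have hyε : y ^ ε ≤ 1 := Real.rpow_le_one hy0.le (by linarith) hε.le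
  calc ‖y ^ (ε - 1) * ((1 - y) ^ ε - 1)‖
      = y ^ (ε - 1) * |(1 - y) ^ ε - 1| := by
        rw [norm_mul, Real.norm_eq_abs, Real.norm_eq_abs, abs_of_nonneg hy']
    _ ≤ y ^ (ε - 1) * (2 * ε * y) := by
        exact mul_le_mul_of_nonneg_left habs hy'
    _ = 2 * ε * y ^ ε := by rw [← hid]; ring
    _ ≤ 2 * ε * 1 := by nlinarith
    _ = 2 * ε := by ring

lemma J_integrable {ε : ℝ} (hε : 0 < ε) :
    IntervalIntegrable (fun y : ℝ => y ^ (ε - 1) * ((1 - y) ^ ε - 1)) volume 0 (1/2) := by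
  rw [intervalIntegrable_iff_integrableOn_Ioc_of_le (by norm_num)]
  have hcont : ContinuousOn (fun y : ℝ => y ^ (ε - 1) * ((1 - y) ^ ε - 1))
      (Set.Ioc (0:ℝ) (1/2)) := by
    apply ContinuousOn.mul
    · exact ContinuousOn.rpow_const continuousOn_id (fun y hy => Or.inl hy.1.ne')
    · apply ContinuousOn.sub _ continuousOn_const
      exact ContinuousOn.rpow_const (continuousOn_const.sub continuousOn_id)
        (fun y hy => Or.inr hε.le)
  refine Integrable.mono' (g := fun _ => 2 * ε) (integrable_const _)
    (hcont.aestronglyMeasurable measurableSet_Ioc) ?_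
  rw [ae_restrict_iff' measurableSet_Ioc]
  exact ae_of_all _ fun y hy => pt_bound hε hy

lemma J_bound {ε : ℝ} (hε : 0 < ε) : |Jfun ε| ≤ ε := by
  have h := intervalIntegral.norm_integral_le_of_norm_le_const (C := 2 * ε)
    (f := fun y : ℝ => y ^ (ε - 1) * ((1 - y) ^ ε - 1)) (a := 0) (b := 1/2) ?_
  · rw [Real.norm_eq_abs] at h
    calc |Jfun ε| ≤ 2 * ε * |1/2 - 0| := h
    _ = ε := by rw [abs_of_nonneg (by norm_num : (0:ℝ) ≤ 1/2 - 0)]; ring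
  · intro y hy
    rw [Set.uIoc_of_le (by norm_num : (0:ℝ) ≤ 1/2)] at hy
    exact pt_bound hε hy

lemma key_eq {ε : ℝ} (hε : 0 < ε) :
    (1 - regIncBeta (1/2) ε (1 + ε)) / ε = (1 - hfun ε) / ε - Dfun ε * Jfun ε := by
  have hΓε : Real.Gamma (1 + ε) = ε * Real.Gamma ε := by
    rw [add_comm]; exact Real.Gamma_add_one hε.ne'
  have hΓεpos : 0 < Real.Gamma ε := Real.Gamma_pos_of_pos hε
  have hΓ1εpos : 0 < Real.Gamma (1 + ε) := Real.Gamma_pos_of_pos (by linarith)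
  -- rewrite regIncBeta
  have hrib : regIncBeta (1/2) ε (1 + ε) = Real.Gamma (1 + 2 * ε) /
      (Real.Gamma ε * Real.Gamma (1 + ε)) *
      ∫ y in (0:ℝ)..(1/2), y ^ (ε - 1) * (1 - y) ^ ε := by
    rw [regIncBeta, show ε + (1 + ε) = 1 + 2 * ε by ring, show 1 + ε - 1 = ε by ring]
  -- split the integral
  have ig1 : IntervalIntegrable (fun y : ℝ => y ^ (ε - 1)) volume 0 (1/2) :=
    intervalIntegral.intervalIntegrable_rpow' (by linarith)
  have ig2 := J_integrable hε
  have hsplit : (∫ y in (0:ℝ)..(1/2), y ^ (ε - 1) * (1 - y) ^ ε)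
      = (1/2 : ℝ) ^ ε / ε + Jfun ε := by
    have hpt : ∀ y ∈ Set.uIcc (0:ℝ) (1/2), y ^ (ε - 1) * (1 - y) ^ ε
        = y ^ (ε - 1) + y ^ (ε - 1) * ((1 - y) ^ ε - 1) := fun y _ => by ring
    rw [intervalIntegral.integral_congr hpt, intervalIntegral.integral_add ig1 ig2]
    have h1 : (∫ y in (0:ℝ)..(1/2), y ^ (ε - 1)) = (1/2 : ℝ) ^ ε / ε := by
      rw [integral_rpow (Or.inl (by linarith : (-1:ℝ) < ε - 1)),
        show ε - 1 + 1 = ε by ring, Real.zero_rpow hε.ne']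
      ring
    rw [h1]; rfl
  have hK : Real.Gamma (1 + 2 * ε) / (Real.Gamma ε * Real.Gamma (1 + ε)) = ε * Dfun ε := by
    rw [Dfun, hΓε]
    field_simp
  rw [hrib, hsplit, hK, hfun]
  field_simp
  ring

lemma main_lim : Tendsto (fun ε : ℝ => (1 - regIncBeta (1/2) ε (1 + ε)) / ε)
    (𝓝[>] (0:ℝ)) (𝓝 (Real.log 2)) := by
  -- first summand
  have hD : Tendsto Dfun (𝓝[>] (0:ℝ)) (𝓝 1) := by
    have := hasDerivAt_D.differentiableAt.continuousAt.tendsto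
    rw [Dfun_zero] at this
    exact this.mono_left nhdsWithin_le_nhds
  have hJ : Tendsto Jfun (𝓝[>] (0:ℝ)) (𝓝 0) := by
    have hid : Tendsto (fun ε : ℝ => ε) (𝓝[>] (0:ℝ)) (𝓝 0) :=
      tendsto_id.mono_left nhdsWithin_le_nhds
    refine squeeze_zero_norm' ?_ hid
    filter_upwards [self_mem_nhdsWithin] with ε (hε : 0 < ε)
    exact J_bound hε
  have hDJ : Tendsto (fun ε => Dfun ε * Jfun ε) (𝓝[>] (0:ℝ)) (𝓝 0) := by
    simpa using hD.mul hJ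
  have hslope : Tendsto (fun ε => (1 - hfun ε) / ε) (𝓝[>] (0:ℝ)) (𝓝 (Real.log 2)) := by
    have h := hasDerivAt_iff_tendsto_slope.mp hasDerivAt_h
    have h' := (h.mono_left (nhdsWithin_mono 0 (fun x hx => ne_of_gt hx))).neg
    rw [show -(-Real.log 2) = Real.log 2 by ring] at h'
    refine h'.congr' ?_
    filter_upwards [self_mem_nhdsWithin] with ε (hε : 0 < ε)
    rw [slope_def_field, hfun_zero, sub_zero, ← neg_div, neg_sub]
  have := hslope.sub hDJ
  rw [sub_zero] at this
  refine this.congr' ?_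
  filter_upwards [self_mem_nhdsWithin] with ε (hε : 0 < ε)
  exact (key_eq hε).symm

lemma g_lim : Tendsto (fun ε : ℝ => 1 - regIncBeta (1/2) ε (1 + ε))
    (𝓝[>] (0:ℝ)) (𝓝 0) := by
  have hid : Tendsto (fun ε : ℝ => ε) (𝓝[>] (0:ℝ)) (𝓝 0) :=
    tendsto_id.mono_left nhdsWithin_le_nhds
  have := hid.mul main_lim
  rw [zero_mul] at this
  refine this.congr' ?_
  filter_upwards [self_mem_nhdsWithin] with ε (hε : 0 < ε)
  rw [mul_div_cancel₀ _ hε.ne']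

/-- `φ₁(δ) = 1 − δ(1 − I_{1/2}(1/(δ−2), (δ−1)/(δ−2))) → 1 − ln 2` as `δ → ∞`. -/
theorem phi1_tendsto_one_sub_log_two :
    Filter.Tendsto
      (fun δ : ℕ => 1 - (δ : ℝ) *
        (1 - regIncBeta (1 / 2) (1 / ((δ : ℝ) - 2)) (((δ : ℝ) - 1) / ((δ : ℝ) - 2))))
      Filter.atTop (nhds (1 - Real.log 2)) := by
  set u : ℕ → ℝ := fun δ => 1 / ((δ : ℝ) - 2) with hu_def
  have hu : Tendsto u atTop (𝓝[>] (0:ℝ)) := by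
    rw [tendsto_nhdsWithin_iff]
    constructor
    · have h1 : Tendsto (fun δ : ℕ => (δ : ℝ) - 2) atTop atTop :=
        tendsto_atTop_add_const_right _ (-2) tendsto_natCast_atTop_atTop
      simpa [hu_def, one_div, Pi.inv_def] using h1.inv_tendsto_atTop
    · filter_upwards [eventually_ge_atTop 3] with δ hδ
      have : (3:ℝ) ≤ (δ:ℝ) := by exact_mod_cast hδ
      have : (0:ℝ) < (δ:ℝ) - 2 := by linarith
      simp only [hu_def, Set.mem_Ioi]
      positivity
  have h1 := main_lim.comp hu
  have h2 := g_lim.comp hu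
  have h3 : Tendsto (fun δ : ℕ => (1 - regIncBeta (1/2) (u δ) (1 + u δ)) / (u δ)
      + 2 * (1 - regIncBeta (1/2) (u δ) (1 + u δ))) atTop (𝓝 (Real.log 2)) := by
    have := h1.add (h2.const_mul 2)
    simpa using this
  have h4 : Tendsto (fun δ : ℕ => (δ : ℝ) *
      (1 - regIncBeta (1 / 2) (1 / ((δ : ℝ) - 2)) (((δ : ℝ) - 1) / ((δ : ℝ) - 2))))
      atTop (𝓝 (Real.log 2)) := by
    refine h3.congr' ?_
    filter_upwards [eventually_ge_atTop 3] with δ hδ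
    have h3' : (3:ℝ) ≤ (δ:ℝ) := by exact_mod_cast hδ
    have hpos : (0:ℝ) < (δ:ℝ) - 2 := by linarith
    have hβ : ((δ : ℝ) - 1) / ((δ : ℝ) - 2) = 1 + u δ := by
      rw [hu_def]
      field_simp
      ring
    have huδ : u δ = 1 / ((δ:ℝ) - 2) := rfl
    rw [hβ]
    have hu_ne : u δ ≠ 0 := by rw [huδ]; positivity
    rw [huδ, div_div_eq_mul_div, div_one]
    ring
  have := h4.const_sub 1
  exact this
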